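/- arXiv:2207.02557 — 5 statements merged into one kernel-verified Lean document; each statement's English description precedes it below -/
import Mathlib

section
/- Let X be a proper geodesic ε-locally uniquely geodesic metric space. Then the map sending a pair of points (a,b) with d(a,b) < ε to the unique shortest path from a to b (parametrized proportionally to arc length on [0,1]) is continuous with respect to the uniform metric on paths. -/
open Set Filter Metric
open scoped ENNReal
open BoundedContinuousFunction
open scoped Topology

/-- A constant-speed shortest path on `[0,1]` from `x` to `y`
(a shortest path parametrized proportionally to arc length). -/
def IsGeodSeg {X : Type*} [MetricSpace X] (γ : ℝ → X) (x y : X) : Prop :=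
  γ 0 = x ∧ γ 1 = y ∧
    ∀ s ∈ Icc (0:ℝ) 1, ∀ t ∈ Icc (0:ℝ) 1, dist (γ s) (γ t) = |s - t| * dist x y

/-- `γ` restricted to `[a,b]` is a constant-speed shortest path between its endpoints. -/
def IsGeodSegOn {X : Type*} [MetricSpace X] (γ : ℝ → X) (a b : ℝ) : Prop :=
  ∀ s ∈ Icc a b, ∀ t ∈ Icc a b,
    (b - a) * dist (γ s) (γ t) = |s - t| * dist (γ a) (γ b)

/-- A geodesic metric space: any two points are joined by a shortest path. -/
def GeodesicSpace (X : Type*) [MetricSpace X] : Prop :=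
  ∀ x y : X, ∃ γ : ℝ → X, IsGeodSeg γ x y

/-- `X` is `ε`-locally uniquely geodesic: any two points at distance `≤ ε` are joined
by a unique shortest path (parametrized proportionally to arc length on `[0,1]`). -/
def LocUniqGeo (X : Type*) [MetricSpace X] (ε : ℝ) : Prop :=
  ∀ x y : X, dist x y ≤ ε → ∃ γ : ℝ → X, IsGeodSeg γ x y ∧
    ∀ γ' : ℝ → X, IsGeodSeg γ' x y → EqOn γ' γ (Icc (0:ℝ) 1)

/-- A closed curve (loop), modelled as a continuous `1`-periodic map `ℝ → X`. -/
def IsLoop {X : Type*} [TopologicalSpace X] (γ : ℝ → X) : Prop :=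
  Continuous γ ∧ ∀ t, γ (t + 1) = γ t

/-- The loop `γ` is null-homotopic (contractible) as a map `S¹ → X`. -/
def NullHomotopicLoop {X : Type*} [TopologicalSpace X] (γ : ℝ → X) : Prop :=
  ∃ H : ℝ × ℝ → X, Continuous H ∧ (∀ t, H (t, 0) = γ t) ∧
    (∃ c, ∀ t, H (t, 1) = c) ∧ (∀ t s, H (t + 1, s) = H (t, s))

/-- Length of the closed curve `γ` (total variation over one period). -/
noncomputable def loopLength {X : Type*} [MetricSpace X] (γ : ℝ → X) : ℝ≥0∞ :=
  eVariationOn γ (Icc 0 1)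

/-- A periodic geodesic: a closed curve which is locally length-minimizing. -/
def IsPeriodicGeodesic {X : Type*} [MetricSpace X] (γ : ℝ → X) : Prop :=
  IsLoop γ ∧ ∃ δ > 0, ∀ s t : ℝ, s ≤ t → t - s ≤ δ →
    eVariationOn γ (Icc s t) = edist (γ s) (γ t)

/-- Shortest paths of length `< ε` vary continuously (in the uniform metric)
with their endpoints. -/
theorem statement1 {X : Type*} [MetricSpace X] [ProperSpace X] {ε : ℝ} (hε : 0 < ε)
    (hgeo : GeodesicSpace X) (huniq : LocUniqGeo X ε) :
    ∃ G : X → X → ℝ → X,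
      (∀ a b : X, dist a b < ε → IsGeodSeg (G a b) a b) ∧
      (∀ a b : X, dist a b < ε → ∀ η > 0, ∃ δ > 0, ∀ a' b' : X,
        dist a' b' < ε → dist a a' < δ → dist b b' < δ →
        ∀ t ∈ Icc (0:ℝ) 1, dist (G a b t) (G a' b' t) < η) := by
  classical
  choose Γ hΓ hΓu using huniq
  set G : X → X → ℝ → X := fun a b t => if h : dist a b ≤ ε then Γ a b h t else a with hGdef
  have hGeq : ∀ a b : X, (h : dist a b ≤ ε) → G a b = Γ a b h := by
    intro a b h; funext t; simp [hGdef, h]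
  have hGgeod : ∀ a b : X, dist a b ≤ ε → IsGeodSeg (G a b) a b := by
    intro a b h; rw [hGeq a b h]; exact hΓ a b h
  refine ⟨G, fun a b hab => hGgeod a b hab.le, ?_⟩
  intro a b hab η hη
  by_contra hcon
  push_neg at hcon
  have hseq : ∀ n : ℕ, ∃ a' b' : X, dist a' b' < ε ∧ dist a a' < ((n:ℝ)+1)⁻¹ ∧
      dist b b' < ((n:ℝ)+1)⁻¹ ∧ ∃ t ∈ Icc (0:ℝ) 1, η ≤ dist (G a b t) (G a' b' t) := by
    intro n
    rcases hcon ((n:ℝ)+1)⁻¹ (by positivity) with ⟨a', b', h1, h2, h3, h4⟩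
    exact ⟨a', b', h1, h2, h3, h4⟩
  choose A B hABε hAa hBb T hT hTd using hseq
  -- the geodesic segments as bounded continuous functions on Icc 0 1
  have hA : ∀ n, IsGeodSeg (G (A n) (B n)) (A n) (B n) := fun n => hGgeod _ _ (hABε n).le
  have hlip : ∀ n, LipschitzWith ε.toNNReal (fun t : Icc (0:ℝ) 1 => G (A n) (B n) t) := by
    intro n
    apply LipschitzWith.of_dist_le_mul
    intro s t
    rw [(hA n).2.2 s s.2 t t.2]
    have : dist (s:Icc (0:ℝ) 1) t = |(s:ℝ) - t| := by
      rw [Subtype.dist_eq, Real.dist_eq]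
    rw [this, Real.coe_toNNReal _ hε.le]
    calc |(s:ℝ) - t| * dist (A n) (B n) ≤ |(s:ℝ) - t| * ε :=
          mul_le_mul_of_nonneg_left (hABε n).le (abs_nonneg _)
      _ = ε * |(s:ℝ) - t| := mul_comm _ _
  set F : ℕ → (Icc (0:ℝ) 1 →ᵇ X) := fun n =>
    BoundedContinuousFunction.mkOfCompact ⟨_, (hlip n).continuous⟩ with hFdef
  have hFval : ∀ n (t : Icc (0:ℝ) 1), F n t = G (A n) (B n) t := fun n t => rfl
  -- the compact set containing all values
  set s : Set X := closedBall a (ε + 1) with hsdef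
  have hs : IsCompact s := isCompact_closedBall a _
  set 𝒜 : Set (Icc (0:ℝ) 1 →ᵇ X) :=
    {f | (∀ x, f x ∈ s) ∧ ∀ x y : Icc (0:ℝ) 1, dist (f x) (f y) ≤ ε * dist x y} with h𝒜def
  have h𝒜closed : IsClosed 𝒜 := by
    rw [h𝒜def, setOf_and]
    apply IsClosed.inter
    · rw [setOf_forall]
      exact isClosed_iInter fun x =>
        Metric.isClosed_closedBall.preimage (continuous_eval_const (x := x))
    · simp only [setOf_forall]
      refine isClosed_iInter fun x => isClosed_iInter fun y => isClosed_le ?_ continuous_const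
      exact (continuous_eval_const (x := x)).dist (continuous_eval_const (x := y))
  have h𝒜comp : IsCompact 𝒜 := by
    apply arzela_ascoli₂ s hs 𝒜 h𝒜closed (fun f x hf => hf.1 x)
    apply Metric.equicontinuous_of_continuity_modulus (fun t => ε * t)
    · have : Tendsto (fun t : ℝ => ε * t) (𝓝 0) (𝓝 (ε * 0)) :=
        (continuous_const.mul continuous_id).tendsto 0
      simpa using this
    · rintro x y ⟨f, hf⟩; exact hf.2 x y
  have hF𝒜 : ∀ n, F n ∈ 𝒜 := by
    intro n
    constructor
    · intro x
      rw [hFval]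
      have h0 : G (A n) (B n) 0 = A n := (hA n).1
      have hd : dist (G (A n) (B n) (x:ℝ)) (A n) ≤ ε := by
        have hkey := (hA n).2.2 x x.2 0 ⟨le_refl 0, zero_le_one⟩
        rw [h0] at hkey
        rw [hkey]
        have hx1 : |(x:ℝ) - 0| ≤ 1 := by
          rw [sub_zero, abs_of_nonneg x.2.1]; exact x.2.2
        calc |(x:ℝ) - 0| * dist (A n) (B n) ≤ 1 * ε := by
              apply mul_le_mul hx1 (hABε n).le dist_nonneg zero_le_one
          _ = ε := one_mul ε
      have : dist a (G (A n) (B n) (x:ℝ)) ≤ ε + 1 := by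
        calc dist a (G (A n) (B n) (x:ℝ)) ≤ dist a (A n) + dist (A n) (G (A n) (B n) (x:ℝ)) :=
              dist_triangle _ _ _
          _ ≤ ((n:ℝ)+1)⁻¹ + ε := by
              rw [dist_comm (A n)]
              exact add_le_add (hAa n).le hd
          _ ≤ 1 + ε := by
              gcongr
              rw [inv_le_one_iff₀]; right; linarith [Nat.cast_nonneg (α := ℝ) n]
          _ = ε + 1 := add_comm 1 ε
      simpa [hsdef, mem_closedBall, dist_comm] using this
    · intro x y
      have := (hlip n).dist_le_mul x y
      rw [Real.coe_toNNReal _ hε.le] at this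
      simpa [hFval] using this
  obtain ⟨f, -, φ, hφ, hconv⟩ := h𝒜comp.tendsto_subseq hF𝒜
  -- pointwise convergence
  have hpt : ∀ t : Icc (0:ℝ) 1, Tendsto (fun n => F (φ n) t) atTop (𝓝 (f t)) := by
    intro t
    exact (((continuous_eval_const (x := t)).tendsto f).comp hconv :)
  have h1 : Tendsto (fun n : ℕ => ((n:ℝ)+1)⁻¹) atTop (𝓝 0) :=
    tendsto_one_div_add_atTop_nhds_zero_nat.congr (by intro n; rw [one_div])
  have h1' : Tendsto (fun n : ℕ => ((φ n : ℝ)+1)⁻¹) atTop (𝓝 0) := by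
    have := h1.comp hφ.tendsto_atTop
    simpa [Function.comp_def] using this
  have hAa' : Tendsto (fun n => A (φ n)) atTop (𝓝 a) := by
    apply tendsto_iff_dist_tendsto_zero.2
    apply squeeze_zero (fun n => dist_nonneg) _ h1'
    intro n
    rw [dist_comm]
    exact (hAa (φ n)).le
  have hBb' : Tendsto (fun n => B (φ n)) atTop (𝓝 b) := by
    apply tendsto_iff_dist_tendsto_zero.2
    apply squeeze_zero (fun n => dist_nonneg) _ h1'
    intro n
    rw [dist_comm]
    exact (hBb (φ n)).le
  have hdistAB : Tendsto (fun n => dist (A (φ n)) (B (φ n))) atTop (𝓝 (dist a b)) :=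
    hAa'.dist hBb'
  -- extend f to ℝ
  set f' : ℝ → X := fun t => if h : t ∈ Icc (0:ℝ) 1 then f ⟨t, h⟩ else a with hf'def
  have hf'eq : ∀ t (h : t ∈ Icc (0:ℝ) 1), f' t = f ⟨t, h⟩ := by
    intro t h; exact dif_pos h
  have h01 : (0:ℝ) ∈ Icc (0:ℝ) 1 := ⟨le_refl 0, zero_le_one⟩
  have h11 : (1:ℝ) ∈ Icc (0:ℝ) 1 := ⟨zero_le_one, le_refl 1⟩
  have hf'geod : IsGeodSeg f' a b := by
    refine ⟨?_, ?_, ?_⟩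
    · rw [hf'eq 0 h01]
      have h1 : Tendsto (fun n => F (φ n) ⟨0, h01⟩) atTop (𝓝 (f ⟨0, h01⟩)) := hpt _
      have h2 : (fun n => F (φ n) ⟨0, h01⟩) = fun n => A (φ n) := by
        funext n; rw [hFval]; exact (hA (φ n)).1
      rw [h2] at h1
      exact tendsto_nhds_unique h1 hAa'
    · rw [hf'eq 1 h11]
      have h1 : Tendsto (fun n => F (φ n) ⟨1, h11⟩) atTop (𝓝 (f ⟨1, h11⟩)) := hpt _
      have h2 : (fun n => F (φ n) ⟨1, h11⟩) = fun n => B (φ n) := by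
        funext n; rw [hFval]; exact (hA (φ n)).2.1
      rw [h2] at h1
      exact tendsto_nhds_unique h1 hBb'
    · intro u hu v hv
      rw [hf'eq u hu, hf'eq v hv]
      have h1 : Tendsto (fun n => dist (F (φ n) ⟨u, hu⟩) (F (φ n) ⟨v, hv⟩)) atTop
          (𝓝 (dist (f ⟨u, hu⟩) (f ⟨v, hv⟩))) := (hpt _).dist (hpt _)
      have h2 : (fun n => dist (F (φ n) ⟨u, hu⟩) (F (φ n) ⟨v, hv⟩)) =
          fun n => |u - v| * dist (A (φ n)) (B (φ n)) := by
        funext n; rw [hFval, hFval]; exact (hA (φ n)).2.2 u hu v hv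
      rw [h2] at h1
      have h3 : Tendsto (fun n => |u - v| * dist (A (φ n)) (B (φ n))) atTop
          (𝓝 (|u - v| * dist a b)) := hdistAB.const_mul _
      exact tendsto_nhds_unique h1 h3
  -- uniqueness
  have heqon : EqOn f' (G a b) (Icc (0:ℝ) 1) := by
    rw [hGeq a b hab.le]
    exact hΓu a b hab.le f' hf'geod
  -- contradiction
  have hfinal : ∀ n, η ≤ dist f (F (φ n)) := by
    intro n
    have ht := hT (φ n)
    calc η ≤ dist (G a b (T (φ n))) (G (A (φ n)) (B (φ n)) (T (φ n))) := hTd (φ n)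
      _ = dist (f ⟨T (φ n), ht⟩) (F (φ n) ⟨T (φ n), ht⟩) := by
          rw [hFval, ← heqon ht, hf'eq _ ht]
      _ ≤ dist f (F (φ n)) := dist_coe_le_dist _
  have hlim : Tendsto (fun n => dist f (F (φ n))) atTop (𝓝 0) := by
    have := tendsto_iff_dist_tendsto_zero.1 hconv
    simpa [dist_comm] using this
  have : η ≤ 0 := ge_of_tendsto' hlim fun n => hfinal n
  linarith
end

section
/- Let X be an ε-locally uniquely geodesic compact geodesic metric space. Then every closed curve γ : S¹ → X of length ≤ ε is null-homotopic in X. -/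
open Set Filter Metric
open scoped ENNReal

lemma geodSeg_through {X : Type*} [MetricSpace X] (hgeo : GeodesicSpace X)
    {x y p : X} {s : ℝ} (hs0 : 0 ≤ s) (hs1 : s ≤ 1)
    (h1 : dist x p = s * dist x y) (h2 : dist p y = (1 - s) * dist x y) :
    ∃ g : ℝ → X, IsGeodSeg g x y ∧ g s = p := by
  rcases eq_or_lt_of_le hs0 with h0 | h0
  · have hp : p = x := by
      have : dist x p = 0 := by rw [h1, ← h0]; ring
      exact (eq_of_dist_eq_zero this).symm
    obtain ⟨g, hg⟩ := hgeo x y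
    exact ⟨g, hg, by rw [← h0, hg.1, hp]⟩
  rcases eq_or_lt_of_le hs1 with h1' | h1'
  · have hp : p = y := by
      have : dist p y = 0 := by rw [h2, h1']; ring
      exact eq_of_dist_eq_zero this
    obtain ⟨g, hg⟩ := hgeo x y
    exact ⟨g, hg, by rw [h1', hg.2.1, hp]⟩
  -- 0 < s < 1
  obtain ⟨α, hα0, hα1, hα⟩ := hgeo x p
  obtain ⟨β, hβ0, hβ1, hβ⟩ := hgeo p y
  set d := dist x y with hd
  set g : ℝ → X := fun u => if u ≤ s then α (u / s) else β ((u - s) / (1 - s)) with hgdef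
  have hs1' : (0:ℝ) < 1 - s := by linarith
  have hgle : ∀ u, u ≤ s → g u = α (u / s) := fun u hu => by simp [hgdef, hu]
  have hggt : ∀ u, ¬ u ≤ s → g u = β ((u - s) / (1 - s)) := fun u hu => by simp [hgdef, hu]
  have hxu : ∀ u, 0 ≤ u → u ≤ s → dist x (g u) = u * d := by
    intro u hu0 hus
    rw [hgle u hus, ← hα0]
    rw [hα 0 ⟨le_refl 0, zero_le_one⟩ (u / s) ⟨div_nonneg hu0 h0.le, (div_le_one h0).2 hus⟩, h1]
    rw [abs_sub_comm, sub_zero, abs_of_nonneg (div_nonneg hu0 h0.le)]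
    field_simp
  have hup : ∀ u, 0 ≤ u → u ≤ s → dist (g u) p = (s - u) * d := by
    intro u hu0 hus
    rw [hgle u hus, ← hα1]
    rw [hα (u / s) ⟨div_nonneg hu0 h0.le, (div_le_one h0).2 hus⟩ 1 ⟨zero_le_one, le_refl 1⟩, h1]
    rw [abs_of_nonpos (by rw [sub_nonpos]; exact (div_le_one h0).2 hus), neg_sub]
    field_simp
  have hpv : ∀ v, s ≤ v → v ≤ 1 → dist p (g v) = (v - s) * d := by
    intro v hsv hv1
    rcases eq_or_lt_of_le hsv with h | h
    · rw [hgle v h.symm.le, ← h]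
      simp [← hα1, div_self (ne_of_gt h0)]
    · rw [hggt v (not_le.2 h), ← hβ0]
      rw [hβ 0 ⟨le_refl 0, zero_le_one⟩ ((v - s) / (1 - s))
        ⟨div_nonneg (by linarith) hs1'.le, (div_le_one hs1').2 (by linarith)⟩, h2]
      rw [abs_sub_comm, sub_zero, abs_of_nonneg (div_nonneg (by linarith) hs1'.le)]
      field_simp
  have hvy : ∀ v, s ≤ v → v ≤ 1 → dist (g v) y = (1 - v) * d := by
    intro v hsv hv1
    rcases eq_or_lt_of_le hsv with h | h
    · rw [hgle v h.symm.le, ← h]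
      rw [div_self (ne_of_gt h0), hα1, h2]
    · rw [hggt v (not_le.2 h), ← hβ1]
      rw [hβ ((v - s) / (1 - s)) ⟨div_nonneg (by linarith) hs1'.le, (div_le_one hs1').2 (by linarith)⟩
        1 ⟨zero_le_one, le_refl 1⟩, h2]
      rw [abs_of_nonpos (by rw [sub_nonpos]; exact (div_le_one hs1').2 (by linarith)), neg_sub]
      field_simp
      ring
  have key : ∀ u v, 0 ≤ u → u ≤ v → v ≤ 1 → dist (g u) (g v) = (v - u) * d := by
    intro u v hu0 huv hv1
    rcases le_or_gt v s with hvs | hvs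
    · -- both in first segment
      rw [hgle u (huv.trans hvs), hgle v hvs]
      rw [hα (u / s) ⟨div_nonneg hu0 h0.le, (div_le_one h0).2 (huv.trans hvs)⟩
        (v / s) ⟨div_nonneg (hu0.trans huv) h0.le, (div_le_one h0).2 hvs⟩, h1]
      rw [div_sub_div_same, abs_div, abs_of_pos h0, abs_of_nonpos (by linarith), neg_sub]
      field_simp
    rcases le_or_gt u s with hus | hus
    · -- u ≤ s < v
      have hd0 : (0:ℝ) ≤ d := dist_nonneg
      have hub : dist (g u) (g v) ≤ (v - u) * d := by
        calc dist (g u) (g v) ≤ dist (g u) p + dist p (g v) := dist_triangle _ _ _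
        _ = (v - u) * d := by rw [hup u hu0 hus, hpv v hvs.le hv1]; ring
      have hlb : d ≤ dist x (g u) + dist (g u) (g v) + dist (g v) y := by
        calc d = dist x y := hd
        _ ≤ dist x (g v) + dist (g v) y := dist_triangle _ _ _
        _ ≤ dist x (g u) + dist (g u) (g v) + dist (g v) y := by
            have := dist_triangle x (g u) (g v); linarith
      rw [hxu u hu0 hus, hvy v hvs.le hv1] at hlb
      have : (v - u) * d ≤ dist (g u) (g v) := by nlinarith
      linarith
    · -- s < u ≤ v
      rw [hggt u (not_le.2 hus), hggt v (not_le.2 (hus.trans_le huv))]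
      rw [hβ ((u - s) / (1 - s)) ⟨div_nonneg (by linarith) hs1'.le, (div_le_one hs1').2 (by linarith)⟩
        ((v - s) / (1 - s)) ⟨div_nonneg (by linarith) hs1'.le, (div_le_one hs1').2 (by linarith)⟩, h2]
      rw [div_sub_div_same, abs_div, abs_of_pos hs1', abs_of_nonpos (by linarith), neg_sub]
      have : v - s - (u - s) = v - u := by ring
      rw [this]
      field_simp
  refine ⟨g, ⟨?_, ?_, ?_⟩, ?_⟩
  · rw [hgle 0 hs0]; simpa using hα0
  · rw [hggt 1 (not_le.2 h1')]
    rw [div_self (ne_of_gt hs1')]; exact hβ1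
  · intro u hu v hv
    rcases le_total u v with h | h
    · rw [key u v hu.1 h hv.2, abs_of_nonpos (by linarith), neg_sub]
    · rw [dist_comm, key v u hv.1 h hu.2, abs_of_nonneg (by linarith)]
  · rw [hgle s (le_refl s), div_self (ne_of_gt h0), hα1]
lemma point_unique {X : Type*} [MetricSpace X] {ε : ℝ} (hgeo : GeodesicSpace X)
    (huniq : LocUniqGeo X ε) {x y p p' : X} {s : ℝ} (hxy : dist x y ≤ ε)
    (hs0 : 0 ≤ s) (hs1 : s ≤ 1)
    (hp1 : dist x p = s * dist x y) (hp2 : dist p y = (1 - s) * dist x y)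
    (hq1 : dist x p' = s * dist x y) (hq2 : dist p' y = (1 - s) * dist x y) : p = p' := by
  obtain ⟨g, hg, hgs⟩ := geodSeg_through hgeo hs0 hs1 hp1 hp2
  obtain ⟨g', hg', hgs'⟩ := geodSeg_through hgeo hs0 hs1 hq1 hq2
  obtain ⟨c, _, hcu⟩ := huniq x y hxy
  rw [← hgs, ← hgs', hcu g hg ⟨hs0, hs1⟩, hcu g' hg' ⟨hs0, hs1⟩]

lemma point_exists {X : Type*} [MetricSpace X] (hgeo : GeodesicSpace X) (x y : X)
    {s : ℝ} (hs0 : 0 ≤ s) (hs1 : s ≤ 1) :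
    ∃ p, dist x p = s * dist x y ∧ dist p y = (1 - s) * dist x y := by
  obtain ⟨g, hg0, hg1, hg⟩ := hgeo x y
  refine ⟨g s, ?_, ?_⟩
  · rw [← hg0, hg 0 ⟨le_refl 0, zero_le_one⟩ s ⟨hs0, hs1⟩,
      abs_sub_comm, sub_zero, abs_of_nonneg hs0, hg0]
  · rw [← hg1, hg s ⟨hs0, hs1⟩ 1 ⟨zero_le_one, le_refl 1⟩,
      abs_of_nonpos (by linarith : s - 1 ≤ 0), neg_sub, hg1]

lemma continuous_of_closed_graph' {Y X : Type*} [TopologicalSpace Y] [TopologicalSpace X]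
    [CompactSpace X] (f : Y → X) (G : Set (Y × X)) (hG : IsClosed G)
    (hgraph : ∀ a p, (a, p) ∈ G ↔ p = f a) : Continuous f := by
  rw [continuous_iff_isClosed]
  intro K hK
  have : f ⁻¹' K = Prod.fst '' (G ∩ (univ ×ˢ K)) := by
    ext a
    constructor
    · intro ha
      exact ⟨(a, f a), ⟨(hgraph a (f a)).2 rfl, ⟨trivial, ha⟩⟩, rfl⟩
    · rintro ⟨⟨a', p⟩, ⟨hGp, -, hpK⟩, rfl⟩
      rwa [(hgraph a' p).1 hGp] at hpK
  rw [this]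
  exact isClosedMap_fst_of_compactSpace _ (hG.inter (isClosed_univ.prod hK))
/-- In a compact geodesic `ε`-locally uniquely geodesic space, every closed curve
of length `≤ ε` is null-homotopic. -/
theorem statement2 {X : Type*} [MetricSpace X] [CompactSpace X] {ε : ℝ} (hε : 0 < ε)
    (hgeo : GeodesicSpace X) (huniq : LocUniqGeo X ε)
    (γ : ℝ → X) (hloop : IsLoop γ) (hlen : loopLength γ ≤ ENNReal.ofReal ε) :
    NullHomotopicLoop γ := by
  classical
  obtain ⟨hcont, hper⟩ := hloop
  have hperiod : Function.Periodic γ 1 := hper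
  have hfract : ∀ t : ℝ, γ t = γ (Int.fract t) := by
    intro t
    rw [Int.fract]
    have h := hperiod.sub_int_mul_eq (x := t) ⌊t⌋
    rw [mul_one] at h
    exact h.symm
  have hdist : ∀ t, dist (γ 0) (γ t) ≤ ε := by
    intro t
    rw [hfract t]
    have h1 : edist (γ 0) (γ (Int.fract t)) ≤ eVariationOn γ (Icc 0 1) :=
      eVariationOn.edist_le γ ⟨le_refl (0:ℝ), zero_le_one⟩
        ⟨Int.fract_nonneg t, (Int.fract_lt_one t).le⟩
    exact (edist_le_ofReal hε.le).1 (h1.trans hlen)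
  set x0 := γ 0 with hx0
  set Q : X × ℝ → X → Prop := fun q p =>
    dist x0 p = q.2 * dist x0 q.1 ∧ dist p q.1 = (1 - q.2) * dist x0 q.1 with hQ
  set F : X × ℝ → X := fun q => if h : ∃ p, Q q p then h.choose else x0 with hF
  have hFspec : ∀ q : X × ℝ, 0 ≤ q.2 → q.2 ≤ 1 → Q q (F q) := by
    intro q h0 h1
    have h : ∃ p, Q q p := point_exists hgeo x0 q.1 h0 h1
    simp only [hF, dif_pos h]
    exact h.choose_spec
  have hFuniq : ∀ q : X × ℝ, dist x0 q.1 ≤ ε → 0 ≤ q.2 → q.2 ≤ 1 →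
      ∀ p, Q q p → p = F q := by
    intro q hq h0 h1 p hp
    have hFq := hFspec q h0 h1
    exact point_unique hgeo huniq hq h0 h1 hp.1 hp.2 hFq.1 hFq.2
  set S : Set (X × ℝ) := {q | dist x0 q.1 ≤ ε ∧ 0 ≤ q.2 ∧ q.2 ≤ 1} with hS
  have hFcont : ContinuousOn F S := by
    rw [continuousOn_iff_continuous_restrict]
    apply continuous_of_closed_graph' _ {qp : S × X | Q (qp.1 : X × ℝ) qp.2}
    · have c1 : Continuous fun qp : S × X => dist x0 qp.2 := by fun_prop
      have c2 : Continuous fun qp : S × X => ((qp.1 : X × ℝ)).2 * dist x0 ((qp.1 : X × ℝ)).1 := by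
        fun_prop
      have c3 : Continuous fun qp : S × X => dist qp.2 ((qp.1 : X × ℝ)).1 := by fun_prop
      have c4 : Continuous fun qp : S × X =>
          (1 - ((qp.1 : X × ℝ)).2) * dist x0 ((qp.1 : X × ℝ)).1 := by fun_prop
      exact (isClosed_eq c1 c2).inter (isClosed_eq c3 c4)
    · intro a p
      constructor
      · intro h
        exact hFuniq a.1 a.2.1 a.2.2.1 a.2.2.2 p h
      · rintro rfl
        exact hFspec a.1 a.2.2.1 a.2.2.2
  set cl : ℝ → ℝ := fun s => max 0 (min 1 (1 - s)) with hcl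
  have hcl0 : cl 0 = 1 := by norm_num [hcl]
  have hcl1 : cl 1 = 0 := by norm_num [hcl]
  have hclmem : ∀ s, 0 ≤ cl s ∧ cl s ≤ 1 := fun s =>
    ⟨le_max_left _ _, max_le zero_le_one (min_le_left _ _)⟩
  refine ⟨fun ts => F (γ ts.1, cl ts.2), ?_, ?_, ⟨x0, ?_⟩, ?_⟩
  · apply hFcont.comp_continuous
    · apply Continuous.prodMk (hcont.comp continuous_fst)
      fun_prop
    · intro ts
      exact ⟨hdist ts.1, (hclmem ts.2).1, (hclmem ts.2).2⟩
  · intro t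
    show F (γ t, cl 0) = γ t
    rw [hcl0]
    have h := (hFspec (γ t, 1) zero_le_one le_rfl).2
    simp only [sub_self, zero_mul] at h
    exact eq_of_dist_eq_zero h
  · intro t
    show F (γ t, cl 1) = x0
    rw [hcl1]
    have h := (hFspec (γ t, 0) le_rfl zero_le_one).1
    simp only [zero_mul] at h
    exact (eq_of_dist_eq_zero h).symm
  · intro t s
    show F (γ (t + 1), cl s) = F (γ t, cl s)
    rw [hper t]
end

section
/- Let X be a compact, ε-locally uniquely geodesic, geodesic metric space with π₁(X) ≠ 0. Then every non-contractible closed rectifiable curve in X has length strictly greater than ε. -/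
open Set Filter Metric
open scoped ENNReal Topology

section Aux
variable {X : Type*} [MetricSpace X]

lemma geodSeg_dists {γ : ℝ → X} {x y : X} (h : IsGeodSeg γ x y) {s : ℝ}
    (hs : s ∈ Icc (0:ℝ) 1) :
    dist x (γ s) = s * dist x y ∧ dist (γ s) y = (1 - s) * dist x y := by
  obtain ⟨h0, h1, hd⟩ := h
  constructor
  · have := hd 0 ⟨le_refl 0, zero_le_one⟩ s hs
    rw [h0] at this
    rw [this, abs_of_nonpos (by linarith [hs.1])]
    ring_nf
  · have := hd s hs 1 ⟨zero_le_one, le_refl 1⟩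
    rw [h1] at this
    rw [this, abs_of_nonpos (by linarith [hs.2])]
    ring_nf

/-- key uniqueness: the point at parameter `s` on a geodesic from `x` to `y`
is characterized by its distances to the endpoints. -/
lemma uniq_point {ε : ℝ} (hgeo : GeodesicSpace X) (huniq : LocUniqGeo X ε)
    {x y : X} (hxy : dist x y ≤ ε) {s : ℝ} (hs : s ∈ Icc (0:ℝ) 1)
    {p : X} (hp1 : dist x p = s * dist x y) (hp2 : dist p y = (1 - s) * dist x y)
    {γ : ℝ → X} (hγ : IsGeodSeg γ x y) : p = γ s := by
  obtain ⟨g0, hg0, hu⟩ := huniq x y hxy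
  have hγs : γ s = g0 s := hu γ hγ hs
  rw [hγs]
  set d := dist x y with hd
  by_cases hd0 : d = 0
  · have hpx : p = x := by
      have : dist x p = 0 := by rw [hp1, hd0, mul_zero]
      exact (dist_eq_zero.mp this).symm
    have : dist (g0 0) (g0 s) = 0 := by
      rw [hg0.2.2 0 ⟨le_refl 0, zero_le_one⟩ s hs, ← hd, hd0, mul_zero]
    rw [hpx, ← hg0.1]
    exact dist_eq_zero.mp this
  have hdpos : 0 < d := lt_of_le_of_ne dist_nonneg (Ne.symm hd0)
  rcases eq_or_lt_of_le hs.1 with hs0 | hs0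
  · have hpx : p = x := by
      have : dist x p = 0 := by rw [hp1, ← hs0, zero_mul]
      exact (dist_eq_zero.mp this).symm
    rw [hpx, ← hs0, hg0.1]
  rcases eq_or_lt_of_le hs.2 with hs1 | hs1
  · have hpy : p = y := by
      have : dist p y = 0 := by rw [hp2, hs1, sub_self, zero_mul]
      exact dist_eq_zero.mp this
    rw [hpy, hs1, hg0.2.1]
  -- main case : 0 < s < 1, 0 < d
  obtain ⟨α, hα⟩ := hgeo x p
  obtain ⟨β, hβ⟩ := hgeo p y
  set σ : ℝ → X := fun u => if u ≤ s then α (u / s) else β ((u - s) / (1 - s)) with hσ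
  have h1s : (0:ℝ) < 1 - s := by linarith
  have hmem1 : ∀ u : ℝ, 0 ≤ u → u ≤ s → u / s ∈ Icc (0:ℝ) 1 :=
    fun u h1 h2 => ⟨div_nonneg h1 hs0.le, (div_le_one hs0).mpr h2⟩
  have hmem2 : ∀ u : ℝ, s ≤ u → u ≤ 1 → (u - s) / (1 - s) ∈ Icc (0:ℝ) 1 :=
    fun u h1 h2 => ⟨div_nonneg (by linarith) h1s.le, (div_le_one h1s).mpr (by linarith)⟩
  have hσs : σ s = p := by
    simp only [hσ, if_pos (le_refl s), div_self hs0.ne']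
    exact hα.2.1
  -- distance from x and to y of points on σ
  have hxσ1 : ∀ u : ℝ, 0 ≤ u → u ≤ s → dist x (σ u) = u * d := by
    intro u h1 h2
    simp only [hσ, if_pos h2]
    have := (geodSeg_dists hα (hmem1 u h1 h2)).1
    rw [this, hp1]
    field_simp
  have hσy2 : ∀ u : ℝ, s < u → u ≤ 1 → dist (σ u) y = (1 - u) * d := by
    intro u h1 h2
    simp only [hσ, if_neg (not_le.mpr h1)]
    have := (geodSeg_dists hβ (hmem2 u h1.le h2)).2
    rw [this, hp2]
    field_simp
    ring
  have key : ∀ u ∈ Icc (0:ℝ) 1, ∀ v ∈ Icc (0:ℝ) 1, u ≤ v →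
      dist (σ u) (σ v) = (v - u) * d := by
    intro u hu v hv huv
    by_cases hvs : v ≤ s
    · have hus : u ≤ s := le_trans huv hvs
      simp only [hσ, if_pos hvs, if_pos hus]
      rw [hα.2.2 _ (hmem1 u hu.1 hus) _ (hmem1 v hv.1 hvs), hp1]
      rw [abs_of_nonpos (sub_nonpos.mpr ((div_le_div_iff_of_pos_right hs0).mpr huv))]
      field_simp
      ring
    push_neg at hvs
    by_cases hus : u ≤ s
    · -- the mixed case
      have hub : dist (σ u) (σ v) ≤ (v - u) * d := by
        have t1 : dist (σ u) p = (s - u) * d := by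
          simp only [hσ, if_pos hus]
          have := (geodSeg_dists hα (hmem1 u hu.1 hus)).2
          rw [this, hp1]
          field_simp
        have t2 : dist p (σ v) = (v - s) * d := by
          simp only [hσ, if_neg (not_le.mpr hvs)]
          have := (geodSeg_dists hβ (hmem2 v hvs.le hv.2)).1
          rw [this, hp2]
          field_simp
        calc dist (σ u) (σ v) ≤ dist (σ u) p + dist p (σ v) := dist_triangle _ _ _
          _ = (v - u) * d := by rw [t1, t2]; ring
      have hlb : (v - u) * d ≤ dist (σ u) (σ v) := by
        have t1 : dist x (σ u) = u * d := hxσ1 u hu.1 hus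
        have t2 : dist (σ v) y = (1 - v) * d := hσy2 v hvs hv.2
        have := dist_triangle4 x (σ u) (σ v) y
        rw [t1, t2, ← hd] at this
        nlinarith [this]
      linarith
    · push_neg at hus
      simp only [hσ, if_neg (not_le.mpr hus), if_neg (not_le.mpr hvs)]
      rw [hβ.2.2 _ (hmem2 u hus.le hu.2) _ (hmem2 v hvs.le hv.2), hp2]
      rw [abs_of_nonpos (sub_nonpos.mpr ((div_le_div_iff_of_pos_right h1s).mpr (by linarith)))]
      field_simp
      ring
  have hσgeod : IsGeodSeg σ x y := by
    refine ⟨?_, ?_, ?_⟩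
    · simp only [hσ, if_pos hs0.le]
      rw [zero_div]
      exact hα.1
    · simp only [hσ, if_neg (not_le.mpr hs1)]
      rw [div_self h1s.ne']
      exact hβ.2.1
    · intro u hu v hv
      rcases le_total u v with h | h
      · rw [key u hu v hv h, abs_of_nonpos (by linarith), ← hd]
        ring
      · rw [dist_comm, key v hv u hu h, abs_of_nonneg (by linarith), ← hd]
  have := hu σ hσgeod hs
  rw [← hσs, this]
end Aux

lemma cont_geod {X : Type*} [MetricSpace X] [CompactSpace X] {ε : ℝ}
    (hgeo : GeodesicSpace X) (huniq : LocUniqGeo X ε)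
    (g : X → X → ℝ → X) (hg : ∀ x y, IsGeodSeg (g x y) x y) :
    ContinuousOn (fun z : X × X × ℝ => g z.1 z.2.1 z.2.2)
      {z : X × X × ℝ | dist z.1 z.2.1 ≤ ε ∧ z.2.2 ∈ Icc (0:ℝ) 1} := by
  set D := {z : X × X × ℝ | dist z.1 z.2.1 ≤ ε ∧ z.2.2 ∈ Icc (0:ℝ) 1} with hD
  set f : X × X × ℝ → X := fun z => g z.1 z.2.1 z.2.2 with hf
  intro z hz
  rw [ContinuousWithinAt, tendsto_iff_seq_tendsto]
  intro u hu
  rw [tendsto_nhdsWithin_iff] at hu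
  obtain ⟨hu1, hu2⟩ := hu
  have hx : Tendsto (fun n => (u n).1) atTop (𝓝 z.1) :=
    (continuous_fst.tendsto z).comp hu1
  have hy : Tendsto (fun n => (u n).2.1) atTop (𝓝 z.2.1) :=
    ((continuous_fst.comp continuous_snd).tendsto z).comp hu1
  have hs : Tendsto (fun n => (u n).2.2) atTop (𝓝 z.2.2) :=
    ((continuous_snd.comp continuous_snd).tendsto z).comp hu1
  apply tendsto_of_subseq_tendsto
  intro ns hns
  obtain ⟨p', -, φ, hφ, hp'⟩ :=
    isCompact_univ.tendsto_subseq (x := fun n => f (u (ns n))) (fun n => mem_univ _)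
  refine ⟨φ, ?_⟩
  have hnsφ : Tendsto (fun n => ns (φ n)) atTop atTop :=
    hns.comp hφ.tendsto_atTop
  have hmem : ∀ᶠ n in atTop, u (ns (φ n)) ∈ D := hnsφ.eventually hu2
  have hX : Tendsto (fun n => (u (ns (φ n))).1) atTop (𝓝 z.1) := hx.comp hnsφ
  have hY : Tendsto (fun n => (u (ns (φ n))).2.1) atTop (𝓝 z.2.1) := hy.comp hnsφ
  have hS : Tendsto (fun n => (u (ns (φ n))).2.2) atTop (𝓝 z.2.2) := hs.comp hnsφ
  have hP : Tendsto (fun n => f (u (ns (φ n)))) atTop (𝓝 p') := hp'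
  have heq1 : dist z.1 p' = z.2.2 * dist z.1 z.2.1 := by
    refine tendsto_nhds_unique ((hX.dist hP).congr' ?_) (hS.mul (hX.dist hY))
    filter_upwards [hmem] with n hn
    exact (geodSeg_dists (hg (u (ns (φ n))).1 (u (ns (φ n))).2.1) hn.2).1
  have heq2 : dist p' z.2.1 = (1 - z.2.2) * dist z.1 z.2.1 := by
    refine tendsto_nhds_unique ((hP.dist hY).congr' ?_) (((tendsto_const_nhds (x := (1:ℝ))).sub hS).mul (hX.dist hY))
    filter_upwards [hmem] with n hn
    exact (geodSeg_dists (hg (u (ns (φ n))).1 (u (ns (φ n))).2.1) hn.2).2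
  have hfin : p' = f z :=
    uniq_point hgeo huniq hz.1 hz.2 heq1 heq2 (hg z.1 z.2.1)
  rw [← hfin]
  exact hp'

theorem statement4' {X : Type*} [MetricSpace X] [CompactSpace X] {ε : ℝ} (hε : 0 < ε)
    (hgeo : GeodesicSpace X) (huniq : LocUniqGeo X ε)
    (γ : ℝ → X) (hloop : IsLoop γ)
    (hnc : ¬ (∃ H : ℝ × ℝ → X, Continuous H ∧ (∀ t, H (t, 0) = γ t) ∧
      (∃ c, ∀ t, H (t, 1) = c) ∧ (∀ t s, H (t + 1, s) = H (t, s)))) :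
    ENNReal.ofReal ε < eVariationOn γ (Icc 0 1) := by
  by_contra hcon
  apply hnc
  have hle : eVariationOn γ (Icc 0 1) ≤ ENNReal.ofReal ε := not_lt.mp hcon
  have hgeo' := hgeo
  choose g hg using hgeo'
  have hdist : ∀ t : ℝ, dist (γ 0) (γ t) ≤ ε := by
    intro t
    have hper : Function.Periodic γ 1 := hloop.2
    have h1 : γ t = γ (Int.fract t) := by
      have h2 := hper.sub_int_mul_eq (x := t) (n := ⌊t⌋)
      rw [Int.fract]
      rw [← h2]
      norm_num
    have hmem : Int.fract t ∈ Icc (0:ℝ) 1 := ⟨Int.fract_nonneg t, (Int.fract_lt_one t).le⟩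
    have h3 := eVariationOn.edist_le γ (show (0:ℝ) ∈ Icc (0:ℝ) 1 from ⟨le_refl _, zero_le_one⟩) hmem
    have h2 : edist (γ 0) (γ (Int.fract t)) ≤ ENNReal.ofReal ε := le_trans h3 hle
    rw [h1]
    rw [edist_dist] at h2
    exact (ENNReal.ofReal_le_ofReal_iff hε.le).mp h2
  set c : ℝ → ℝ := fun s => 1 - max 0 (min 1 s) with hc
  have hc0 : c 0 = 1 := by simp [hc]
  have hc1 : c 1 = 0 := by simp [hc]
  have hcmem : ∀ s, c s ∈ Icc (0:ℝ) 1 := by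
    intro s
    constructor
    · simp only [hc, sub_nonneg]
      exact max_le zero_le_one (min_le_left 1 s)
    · simp only [hc]
      have : (0:ℝ) ≤ max 0 (min 1 s) := le_max_left 0 _
      linarith
  have hccont : Continuous c := by
    simp only [hc]
    fun_prop
  refine ⟨fun q => g (γ 0) (γ q.1) (c q.2), ?_, ?_, ⟨γ 0, ?_⟩, ?_⟩
  · have hco := cont_geod hgeo huniq g hg
    have hu : Continuous (fun q : ℝ × ℝ => ((γ 0, (γ q.1, c q.2)) : X × X × ℝ)) :=
      continuous_const.prodMk ((hloop.1.comp continuous_fst).prodMk (hccont.comp continuous_snd))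
    exact hco.comp_continuous hu (fun q => ⟨hdist q.1, hcmem q.2⟩)
  · intro t
    simp only [hc0]
    exact (hg (γ 0) (γ t)).2.1
  · intro t
    simp only [hc1]
    exact (hg (γ 0) (γ t)).1
  · intro t s
    simp only [hloop.2 t]

/-- In a compact `ε`-locally uniquely geodesic space with nontrivial fundamental
group, every non-contractible closed rectifiable curve has length `> ε`. -/
theorem statement4 {X : Type*} [MetricSpace X] [CompactSpace X] {ε : ℝ} (hε : 0 < ε)
    (hgeo : GeodesicSpace X) (huniq : LocUniqGeo X ε)
    (x : X) (hπ : Nontrivial (FundamentalGroup X x))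
    (γ : ℝ → X) (hloop : IsLoop γ) (hrect : loopLength γ ≠ ⊤)
    (hnc : ¬ NullHomotopicLoop γ) :
    ENNReal.ofReal ε < loopLength γ := by
  exact statement4' hε hgeo huniq γ hloop hnc
end

section
/- Let X be an ε-locally uniquely geodesic geodesic metric space and let γ : [0,1] → X be a closed curve (γ(0) = γ(1)). Suppose k ∈ ℕ is such that each set γ([t, t + 1/k]) (indices mod 1) has diameter < ε/2. Then the Birkhoff shortening D(γ) — obtained by first replacing γ on each interval [2i/(2k), (2i+2)/(2k)] by the unique shortest path between its endpoints parametrized with constant speed, and then replacing the result on each interval [(2i+1)/(2k), (2i+3)/(2k)] (mod 1) by the unique shortest path — is a closed curve that is Lipschitz with constant kε/2. -/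
open Set Filter Metric
open scoped ENNReal

/-- Integer periodicity from `1`-periodicity. -/
lemma perInt {X : Type*} {f : ℝ → X} (hf : ∀ t, f (t + 1) = f t) (q : ℤ) (x : ℝ) :
    f (x + q) = f x := by
  have h : Function.Periodic f 1 := hf
  simpa using (h.int_mul q) x

/-- `IsGeodSegOn` is invariant under translation by a period. -/
lemma geodSegOn_translate {X : Type*} [MetricSpace X] {f : ℝ → X} {c : ℝ}
    (hf : ∀ x, f (x + c) = f x) {a b : ℝ} (h : IsGeodSegOn f a b) :
    IsGeodSegOn f (a + c) (b + c) := by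
  have key : ∀ x : ℝ, f x = f (x - c) := fun x => by
    have h2 := hf (x - c); rw [sub_add_cancel] at h2; exact h2
  intro s hs t ht
  have hs' : s - c ∈ Icc a b := ⟨by linarith [hs.1], by linarith [hs.2]⟩
  have ht' : t - c ∈ Icc a b := ⟨by linarith [ht.1], by linarith [ht.2]⟩
  have h' := h _ hs' _ ht'
  rw [show s - c - (t - c) = s - t by ring] at h'
  rw [hf a, hf b, key s, key t, show b + c - (a + c) = b - a by ring]
  exact h'

/-- On a constant-speed segment of length `L` whose endpoints are at distance `≤ d`,
any two parameters `s t` have `dist ≤ |s-t|/L * d`. -/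
lemma seg_lip {X : Type*} [MetricSpace X] {f : ℝ → X} {x L d : ℝ} (hL : 0 < L)
    (h : IsGeodSegOn f x (x + L)) (hd : dist (f x) (f (x + L)) ≤ d) :
    ∀ s ∈ Icc x (x + L), ∀ t ∈ Icc x (x + L), dist (f s) (f t) ≤ |s - t| / L * d := by
  intro s hs t ht
  have h' := h s hs t ht
  rw [add_sub_cancel_left] at h'
  have e : dist (f s) (f t) = |s - t| / L * dist (f x) (f (x + L)) := by
    rw [div_mul_eq_mul_div, eq_div_iff hL.ne']
    linear_combination h'
  rw [e]
  exact mul_le_mul_of_nonneg_left hd (by positivity)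

set_option maxHeartbeats 1000000 in
/-- The Birkhoff shortening `D(γ) = γ₂` of a closed curve `γ` (each `γ([t,t+1/k])`
of diameter `< ε/2`) is a closed curve, Lipschitz with constant `kε/2`. -/
theorem statement6
    {X : Type*} [MetricSpace X] {ε : ℝ} (hε : 0 < ε)
    (hgeo : GeodesicSpace X) (huniq : LocUniqGeo X ε)
    (k : ℕ) (hk : 0 < k) (γ γ₁ γ₂ : ℝ → X)
    (hloop : IsLoop γ) (hper1 : ∀ t, γ₁ (t + 1) = γ₁ t) (hper2 : ∀ t, γ₂ (t + 1) = γ₂ t)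
    (hdiam : ∀ t s s' : ℝ, s ∈ Icc t (t + 1/(k:ℝ)) → s' ∈ Icc t (t + 1/(k:ℝ)) →
      dist (γ s) (γ s') < ε/2)
    (h1a : ∀ i : Fin k, γ₁ ((2*(i:ℝ))/(2*k)) = γ ((2*(i:ℝ))/(2*k)))
    (h1b : ∀ i : Fin k, IsGeodSegOn γ₁ ((2*(i:ℝ))/(2*k)) ((2*(i:ℝ)+2)/(2*k)))
    (h2a : ∀ i : Fin k, γ₂ ((2*(i:ℝ)+1)/(2*k)) = γ₁ ((2*(i:ℝ)+1)/(2*k)))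
    (h2b : ∀ i : Fin k, IsGeodSegOn γ₂ ((2*(i:ℝ)+1)/(2*k)) ((2*(i:ℝ)+3)/(2*k))) :
    (∀ t, γ₂ (t + 1) = γ₂ t) ∧
    ∀ s t : ℝ, dist (γ₂ s) (γ₂ t) ≤ ((k:ℝ) * ε / 2) * |s - t| := by
  have hk0 : (0:ℝ) < (k:ℝ) := by exact_mod_cast hk
  have hkne : (k:ℝ) ≠ 0 := ne_of_gt hk0
  have hk1 : (0:ℝ) < 1/(k:ℝ) := by positivity
  have h2k : (0:ℝ) < 1/(2*(k:ℝ)) := by positivity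
  have hhalf : 1/(2*(k:ℝ)) + 1/(2*(k:ℝ)) = 1/(k:ℝ) := by ring
  have p0 := perInt hloop.2
  have p1 := perInt hper1
  have p2 := perInt hper2
  -- decompose an integer index into a `Fin k` part and a period
  have key : ∀ i : ℤ, ∃ (j : Fin k) (q : ℤ), (i:ℝ) = ((j:ℕ):ℝ) + (k:ℝ) * (q:ℝ) := by
    intro i
    have h2 : i % (k:ℤ) < k := Int.emod_lt_of_pos i (by exact_mod_cast hk)
    have h1 : 0 ≤ i % (k:ℤ) := Int.emod_nonneg i (by exact_mod_cast hk.ne')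
    refine ⟨⟨(i % k).toNat, by omega⟩, i / k, ?_⟩
    have h4 := Int.mul_ediv_add_emod i (k:ℤ)
    have h3 : (i : ℤ) = ((i % k).toNat : ℤ) + k * (i / k) := by omega
    exact_mod_cast h3
  -- extend the hypotheses to all integer indices
  have H1a : ∀ i : ℤ, γ₁ ((2*(i:ℝ))/(2*k)) = γ ((2*(i:ℝ))/(2*k)) := by
    intro i
    obtain ⟨j, q, hj⟩ := key i
    have e : (2*(i:ℝ))/(2*(k:ℝ)) = (2*((j:ℕ):ℝ))/(2*k) + (q:ℝ) := by
      rw [hj]; field_simp <;> ring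
    rw [e, p1 q, p0 q]
    exact h1a j
  have H2a : ∀ i : ℤ, γ₂ ((2*(i:ℝ)+1)/(2*k)) = γ₁ ((2*(i:ℝ)+1)/(2*k)) := by
    intro i
    obtain ⟨j, q, hj⟩ := key i
    have e : (2*(i:ℝ)+1)/(2*(k:ℝ)) = (2*((j:ℕ):ℝ)+1)/(2*k) + (q:ℝ) := by
      rw [hj]; field_simp <;> ring
    rw [e, p2 q, p1 q]
    exact h2a j
  have H1b : ∀ i : ℤ, IsGeodSegOn γ₁ ((2*(i:ℝ))/(2*k)) ((2*(i:ℝ)+2)/(2*k)) := by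
    intro i
    obtain ⟨j, q, hj⟩ := key i
    have h := geodSegOn_translate (fun x => p1 q x) (h1b j)
    have e1 : (2*((j:ℕ):ℝ))/(2*(k:ℝ)) + (q:ℝ) = (2*(i:ℝ))/(2*k) := by
      rw [hj]; field_simp <;> ring
    have e2 : (2*((j:ℕ):ℝ)+2)/(2*(k:ℝ)) + (q:ℝ) = (2*(i:ℝ)+2)/(2*k) := by
      rw [hj]; field_simp <;> ring
    rwa [e1, e2] at h
  have H2b : ∀ i : ℤ, IsGeodSegOn γ₂ ((2*(i:ℝ)+1)/(2*k)) ((2*(i:ℝ)+3)/(2*k)) := by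
    intro i
    obtain ⟨j, q, hj⟩ := key i
    have h := geodSegOn_translate (fun x => p2 q x) (h2b j)
    have e1 : (2*((j:ℕ):ℝ)+1)/(2*(k:ℝ)) + (q:ℝ) = (2*(i:ℝ)+1)/(2*k) := by
      rw [hj]; field_simp <;> ring
    have e2 : (2*((j:ℕ):ℝ)+3)/(2*(k:ℝ)) + (q:ℝ) = (2*(i:ℝ)+3)/(2*k) := by
      rw [hj]; field_simp <;> ring
    rwa [e1, e2] at h
  -- distances along `γ` over a `1/k`-interval
  have hγ : ∀ x : ℝ, dist (γ x) (γ (x + 1/(k:ℝ))) < ε/2 := by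
    intro x
    exact hdiam x x (x + 1/(k:ℝ)) ⟨le_refl _, by linarith⟩ ⟨by linarith, le_refl _⟩
  -- Lipschitz-type bound for `γ₁` on each segment of the first step
  have hG1 : ∀ i : ℤ, ∀ s ∈ Icc ((2*(i:ℝ))/(2*(k:ℝ))) ((2*(i:ℝ))/(2*(k:ℝ)) + 1/(k:ℝ)),
      ∀ t ∈ Icc ((2*(i:ℝ))/(2*(k:ℝ))) ((2*(i:ℝ))/(2*(k:ℝ)) + 1/(k:ℝ)),
      dist (γ₁ s) (γ₁ t) ≤ |s - t| / (1/(k:ℝ)) * (ε/2) := by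
    intro i
    have e : (2*(i:ℝ)+2)/(2*(k:ℝ)) = (2*(i:ℝ))/(2*(k:ℝ)) + 1/(k:ℝ) := by
      field_simp <;> ring
    have hseg : IsGeodSegOn γ₁ ((2*(i:ℝ))/(2*(k:ℝ))) ((2*(i:ℝ))/(2*(k:ℝ)) + 1/(k:ℝ)) := by
      have h := H1b i; rwa [e] at h
    have hend : dist (γ₁ ((2*(i:ℝ))/(2*(k:ℝ)))) (γ₁ ((2*(i:ℝ))/(2*(k:ℝ)) + 1/(k:ℝ))) ≤ ε/2 := by
      have h2 := H1a (i+1)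
      push_cast at h2
      rw [show (2*((i:ℝ)+1))/(2*(k:ℝ)) = (2*(i:ℝ))/(2*(k:ℝ)) + 1/(k:ℝ) by field_simp <;> ring] at h2
      rw [H1a i, h2]
      exact (hγ _).le
    exact seg_lip hk1 hseg hend
  -- consecutive odd grid points of `γ₂` are at distance `≤ ε/2`
  have hB : ∀ i : ℤ, dist (γ₂ ((2*(i:ℝ)+1)/(2*(k:ℝ)))) (γ₂ ((2*(i:ℝ)+1)/(2*(k:ℝ)) + 1/(k:ℝ))) ≤ ε/2 := by
    intro i
    have ex1 : (2*(i:ℝ)+1)/(2*(k:ℝ)) = (2*(i:ℝ))/(2*(k:ℝ)) + 1/(2*(k:ℝ)) := by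
      field_simp <;> ring
    have ex3 : (2*(i:ℝ)+1)/(2*(k:ℝ)) + 1/(k:ℝ) = (2*(i:ℝ)+3)/(2*(k:ℝ)) := by
      field_simp <;> ring
    have ea2 : γ₂ ((2*(i:ℝ)+1)/(2*(k:ℝ))) = γ₁ ((2*(i:ℝ)+1)/(2*(k:ℝ))) := H2a i
    have eb2 : γ₂ ((2*(i:ℝ)+3)/(2*(k:ℝ))) = γ₁ ((2*(i:ℝ)+3)/(2*(k:ℝ))) := by
      have h := H2a (i+1); push_cast at h
      rwa [show (2*((i:ℝ)+1)+1)/(2*(k:ℝ)) = (2*(i:ℝ)+3)/(2*(k:ℝ)) by ring] at h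
    rw [ex3, ea2, eb2]
    -- first half
    have d1 : dist (γ₁ ((2*(i:ℝ)+1)/(2*(k:ℝ)))) (γ₁ ((2*(i:ℝ))/(2*(k:ℝ)) + 1/(k:ℝ))) ≤ ε/4 := by
      have h := hG1 i ((2*(i:ℝ)+1)/(2*(k:ℝ)))
        ⟨by rw [ex1]; linarith, by rw [ex1]; linarith⟩
        ((2*(i:ℝ))/(2*(k:ℝ)) + 1/(k:ℝ)) ⟨by linarith, le_refl _⟩
      calc dist (γ₁ ((2*(i:ℝ)+1)/(2*(k:ℝ)))) (γ₁ ((2*(i:ℝ))/(2*(k:ℝ)) + 1/(k:ℝ)))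
          ≤ |(2*(i:ℝ)+1)/(2*(k:ℝ)) - ((2*(i:ℝ))/(2*(k:ℝ)) + 1/(k:ℝ))| / (1/(k:ℝ)) * (ε/2) := h
        _ = ε/4 := by
            rw [show (2*(i:ℝ)+1)/(2*(k:ℝ)) - ((2*(i:ℝ))/(2*(k:ℝ)) + 1/(k:ℝ)) = -(1/(2*(k:ℝ))) by
              field_simp <;> ring]
            rw [abs_neg, abs_of_pos h2k]
            field_simp
            ring
    -- second half
    have d2 : dist (γ₁ ((2*(i:ℝ))/(2*(k:ℝ)) + 1/(k:ℝ))) (γ₁ ((2*(i:ℝ)+3)/(2*(k:ℝ)))) ≤ ε/4 := by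
      have hnext := hG1 (i+1)
      push_cast at hnext
      rw [show (2*((i:ℝ)+1))/(2*(k:ℝ)) = (2*(i:ℝ))/(2*(k:ℝ)) + 1/(k:ℝ) by field_simp <;> ring] at hnext
      have h := hnext ((2*(i:ℝ))/(2*(k:ℝ)) + 1/(k:ℝ)) ⟨le_refl _, by linarith⟩
        ((2*(i:ℝ)+3)/(2*(k:ℝ)))
        ⟨by rw [show (2*(i:ℝ)+3)/(2*(k:ℝ)) = (2*(i:ℝ))/(2*(k:ℝ)) + 1/(k:ℝ) + 1/(2*(k:ℝ)) by
            field_simp <;> ring]; linarith,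
         by rw [show (2*(i:ℝ)+3)/(2*(k:ℝ)) = (2*(i:ℝ))/(2*(k:ℝ)) + 1/(k:ℝ) + 1/(2*(k:ℝ)) by
            field_simp <;> ring]; linarith⟩
      calc dist (γ₁ ((2*(i:ℝ))/(2*(k:ℝ)) + 1/(k:ℝ))) (γ₁ ((2*(i:ℝ)+3)/(2*(k:ℝ))))
          ≤ |(2*(i:ℝ))/(2*(k:ℝ)) + 1/(k:ℝ) - (2*(i:ℝ)+3)/(2*(k:ℝ))| / (1/(k:ℝ)) * (ε/2) := h
        _ = ε/4 := by
            rw [show (2*(i:ℝ))/(2*(k:ℝ)) + 1/(k:ℝ) - (2*(i:ℝ)+3)/(2*(k:ℝ)) = -(1/(2*(k:ℝ))) by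
              field_simp <;> ring]
            rw [abs_neg, abs_of_pos h2k]
            field_simp
            ring
    calc dist (γ₁ ((2*(i:ℝ)+1)/(2*(k:ℝ)))) (γ₁ ((2*(i:ℝ)+3)/(2*(k:ℝ))))
        ≤ dist (γ₁ ((2*(i:ℝ)+1)/(2*(k:ℝ)))) (γ₁ ((2*(i:ℝ))/(2*(k:ℝ)) + 1/(k:ℝ)))
          + dist (γ₁ ((2*(i:ℝ))/(2*(k:ℝ)) + 1/(k:ℝ))) (γ₁ ((2*(i:ℝ)+3)/(2*(k:ℝ)))) :=
          dist_triangle _ _ _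
      _ ≤ ε/4 + ε/4 := add_le_add d1 d2
      _ = ε/2 := by ring
  -- local Lipschitz bound for `γ₂`
  have hL : ∀ i : ℤ, ∀ s ∈ Icc ((2*(i:ℝ)+1)/(2*(k:ℝ))) ((2*(i:ℝ)+1)/(2*(k:ℝ)) + 1/(k:ℝ)),
      ∀ t ∈ Icc ((2*(i:ℝ)+1)/(2*(k:ℝ))) ((2*(i:ℝ)+1)/(2*(k:ℝ)) + 1/(k:ℝ)),
      dist (γ₂ s) (γ₂ t) ≤ ((k:ℝ)*ε/2) * |s - t| := by
    intro i s hs t ht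
    have e : (2*(i:ℝ)+3)/(2*(k:ℝ)) = (2*(i:ℝ)+1)/(2*(k:ℝ)) + 1/(k:ℝ) := by
      field_simp <;> ring
    have hseg : IsGeodSegOn γ₂ ((2*(i:ℝ)+1)/(2*(k:ℝ))) ((2*(i:ℝ)+1)/(2*(k:ℝ)) + 1/(k:ℝ)) := by
      have h := H2b i; rwa [e] at h
    have h := seg_lip hk1 hseg (hB i) s hs t ht
    calc dist (γ₂ s) (γ₂ t) ≤ |s - t| / (1/(k:ℝ)) * (ε/2) := h
      _ = ((k:ℝ)*ε/2) * |s - t| := by field_simp <;> ring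
  -- globalization by induction over the number of grid intervals
  have main : ∀ n : ℕ, ∀ i : ℤ, ∀ s t : ℝ,
      s ∈ Icc ((2*(i:ℝ)+1)/(2*(k:ℝ))) ((2*(i:ℝ)+1)/(2*(k:ℝ)) + 1/(k:ℝ)) →
      (2*(i:ℝ)+1)/(2*(k:ℝ)) ≤ t → t ≤ (2*(i:ℝ)+1)/(2*(k:ℝ)) + 1/(k:ℝ) + (n:ℝ)/(k:ℝ) →
      s ≤ t → dist (γ₂ s) (γ₂ t) ≤ ((k:ℝ)*ε/2) * (t - s) := by
    intro n
    induction n with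
    | zero =>
      intro i s t hs ht1 ht2 hst
      simp only [Nat.cast_zero, zero_div, add_zero] at ht2
      have h := hL i s hs t ⟨ht1, ht2⟩
      rwa [abs_sub_comm, abs_of_nonneg (by linarith)] at h
    | succ n ih =>
      intro i s t hs ht1 ht2 hst
      by_cases hc : t ≤ (2*(i:ℝ)+1)/(2*(k:ℝ)) + 1/(k:ℝ)
      · have h := hL i s hs t ⟨ht1, hc⟩
        rwa [abs_sub_comm, abs_of_nonneg (by linarith)] at h
      · push_neg at hc
        have e : (2*((i:ℝ)+1)+1)/(2*(k:ℝ)) = (2*(i:ℝ)+1)/(2*(k:ℝ)) + 1/(k:ℝ) := by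
          field_simp <;> ring
        have ih' := ih (i+1)
        push_cast at ih'
        rw [e] at ih'
        have esplit : ((n:ℝ)+1)/(k:ℝ) = (n:ℝ)/(k:ℝ) + 1/(k:ℝ) := by ring
        push_cast at ht2
        have d1 := hL i s hs ((2*(i:ℝ)+1)/(2*(k:ℝ)) + 1/(k:ℝ)) ⟨by linarith, le_refl _⟩
        have d2 := ih' ((2*(i:ℝ)+1)/(2*(k:ℝ)) + 1/(k:ℝ)) t ⟨le_refl _, by linarith⟩
          (by linarith) (by linarith [esplit]) hc.le
        calc dist (γ₂ s) (γ₂ t)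
            ≤ dist (γ₂ s) (γ₂ ((2*(i:ℝ)+1)/(2*(k:ℝ)) + 1/(k:ℝ)))
              + dist (γ₂ ((2*(i:ℝ)+1)/(2*(k:ℝ)) + 1/(k:ℝ))) (γ₂ t) := dist_triangle _ _ _
          _ ≤ ((k:ℝ)*ε/2) * |s - ((2*(i:ℝ)+1)/(2*(k:ℝ)) + 1/(k:ℝ))|
              + ((k:ℝ)*ε/2) * (t - ((2*(i:ℝ)+1)/(2*(k:ℝ)) + 1/(k:ℝ))) := add_le_add d1 d2
          _ = ((k:ℝ)*ε/2) * (t - s) := by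
              rw [abs_sub_comm, abs_of_nonneg (by linarith [hs.2])]
              ring
  refine ⟨hper2, ?_⟩
  have lip : ∀ s t : ℝ, s ≤ t → dist (γ₂ s) (γ₂ t) ≤ ((k:ℝ)*ε/2) * (t - s) := by
    intro s t hst
    set i := ⌊(k:ℝ)*s - 1/2⌋ with hi
    have hi1 : (i:ℝ) ≤ (k:ℝ)*s - 1/2 := Int.floor_le _
    have hi2 : (k:ℝ)*s - 1/2 - 1 < (i:ℝ) := by
      have h := Int.lt_floor_add_one ((k:ℝ)*s - 1/2); rw [← hi] at h; linarith
    have hst' : (k:ℝ)*s ≤ (k:ℝ)*t := by nlinarith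
    have hceil : (k:ℝ)*t ≤ (⌈(k:ℝ)*t⌉:ℝ) := Int.le_ceil _
    have hn1 : (0:ℤ) ≤ ⌈(k:ℝ)*t⌉ - i := by
      have h : (i:ℝ) ≤ (⌈(k:ℝ)*t⌉:ℝ) := by linarith
      have h' : i ≤ ⌈(k:ℝ)*t⌉ := by exact_mod_cast h
      omega
    set n := (⌈(k:ℝ)*t⌉ - i).toNat with hn
    have hnval : (n:ℝ) = ((⌈(k:ℝ)*t⌉:ℤ):ℝ) - (i:ℝ) := by
      rw [hn]
      exact_mod_cast Int.toNat_of_nonneg hn1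
    have hmem_s : s ∈ Icc ((2*(i:ℝ)+1)/(2*(k:ℝ))) ((2*(i:ℝ)+1)/(2*(k:ℝ)) + 1/(k:ℝ)) := by
      constructor
      · rw [div_le_iff₀ (by positivity : (0:ℝ) < 2*(k:ℝ))]
        nlinarith
      · rw [show (2*(i:ℝ)+1)/(2*(k:ℝ)) + 1/(k:ℝ) = (2*(i:ℝ)+3)/(2*(k:ℝ)) by field_simp <;> ring]
        rw [le_div_iff₀ (by positivity : (0:ℝ) < 2*(k:ℝ))]
        nlinarith
    have ht1 : (2*(i:ℝ)+1)/(2*(k:ℝ)) ≤ t := le_trans hmem_s.1 hst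
    have ht2 : t ≤ (2*(i:ℝ)+1)/(2*(k:ℝ)) + 1/(k:ℝ) + (n:ℝ)/(k:ℝ) := by
      rw [show (2*(i:ℝ)+1)/(2*(k:ℝ)) + 1/(k:ℝ) + (n:ℝ)/(k:ℝ)
          = (2*(i:ℝ)+3+2*(n:ℝ))/(2*(k:ℝ)) by field_simp <;> ring]
      rw [le_div_iff₀ (by positivity : (0:ℝ) < 2*(k:ℝ))]
      nlinarith [hnval, hceil]
    exact main n i s t hmem_s ht1 ht2 hst
  intro s t
  rcases le_total s t with h | h
  · have hh := lip s t h
    rwa [abs_sub_comm, abs_of_nonneg (by linarith : (0:ℝ) ≤ t - s)]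
  · have hh := lip t s h
    rw [dist_comm, abs_of_nonneg (by linarith : (0:ℝ) ≤ s - t)]
    exact hh
end

section
/- Let X be an ε-locally uniquely geodesic geodesic metric space and γ : [0,1] → X a closed curve to which the Birkhoff shortening process D with parameter k applies (each γ([t, t+1/k]) has diameter < ε/2). If γ is Lipschitz with constant μ, then D(γ) is also Lipschitz with constant μ. -/
open Set Filter Metric
open scoped ENNReal

lemma subdivLip {X : Type*} [MetricSpace X] (f : ℝ → X) (μ δ : ℝ) (hδ : 0 < δ)
    (h : ∀ s t : ℝ, |s - t| ≤ δ → dist (f s) (f t) ≤ μ * |s - t|) :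
    ∀ s t : ℝ, dist (f s) (f t) ≤ μ * |s - t| := by
  have key : ∀ s t : ℝ, s ≤ t → dist (f s) (f t) ≤ μ * (t - s) := by
    intro s t hst
    rcases eq_or_lt_of_le hst with rfl | hlt
    · simpa using h s s (by simp [hδ.le])
    · set n : ℕ := ⌈(t - s)/δ⌉₊ with hn
      have hn0 : 0 < n := Nat.ceil_pos.mpr (div_pos (by linarith) hδ)
      have hn0' : (0:ℝ) < n := by exact_mod_cast hn0
      have hle : (t - s)/δ ≤ n := Nat.le_ceil _
      have hstep : (t - s)/n ≤ δ := by
        rw [div_le_iff₀ hn0']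
        rw [div_le_iff₀ hδ] at hle
        linarith
      set p : ℕ → ℝ := fun i => s + i * ((t - s)/n) with hp
      have h0 : p 0 = s := by simp [hp]
      have hN : p n = t := by
        simp only [hp]
        field_simp
        ring
      calc dist (f s) (f t) = dist (f (p 0)) (f (p n)) := by rw [h0, hN]
        _ ≤ ∑ i ∈ Finset.range n, dist (f (p i)) (f (p (i+1))) :=
              dist_le_range_sum_dist (fun i => f (p i)) n
        _ ≤ ∑ _i ∈ Finset.range n, μ * ((t - s)/n) := by
            apply Finset.sum_le_sum
            intro i _
            have hd : |p i - p (i+1)| = (t - s)/n := by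
              have he : p i - p (i+1) = -((t-s)/n) := by
                simp only [hp]; push_cast; ring
              rw [he, abs_neg, abs_of_nonneg (le_of_lt (div_pos (by linarith) hn0'))]
            have := h (p i) (p (i+1)) (by rw [hd]; exact hstep)
            rwa [hd] at this
        _ = μ * (t - s) := by
            rw [Finset.sum_const, Finset.card_range, nsmul_eq_mul]
            field_simp
  intro s t
  rcases le_total s t with hst | hst
  · rw [abs_sub_comm, abs_of_nonneg (by linarith)]; exact key s t hst
  · rw [abs_of_nonneg (by linarith), dist_comm]; exact key t s hst

lemma geodShift {X : Type*} [MetricSpace X] (f : ℝ → X)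
    (hfZ : ∀ (m : ℤ) (x : ℝ), f (x + m) = f x) (a b : ℝ) (m : ℤ)
    (h : IsGeodSegOn f a b) : IsGeodSegOn f (a + m) (b + m) := by
  intro s hs t ht
  have hs' : s - m ∈ Icc a b := ⟨by linarith [hs.1], by linarith [hs.2]⟩
  have ht' : t - m ∈ Icc a b := ⟨by linarith [ht.1], by linarith [ht.2]⟩
  have key := h (s - m) hs' (t - m) ht'
  have es : f (s - m + m) = f (s - m) := hfZ m (s - m)
  have et : f (t - m + m) = f (t - m) := hfZ m (t - m)
  rw [show s - (m:ℝ) + m = s by ring] at es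
  rw [show t - (m:ℝ) + m = t by ring] at et
  rw [hfZ m a, hfZ m b, es, et,
    show b + (m:ℝ) - (a + m) = b - a by ring,
    show |s - t| = |s - (m:ℝ) - (t - (m:ℝ))| by ring_nf]
  exact key

lemma birkhoffKey {X : Type*} [MetricSpace X] (k : ℕ) (hk : 0 < k) (c : ℝ)
    (g f : ℝ → X) (hgper : ∀ t, g (t + 1) = g t) (hfper : ∀ t, f (t + 1) = f t)
    (ha : ∀ i : Fin k, f (c + (i:ℝ)/k) = g (c + (i:ℝ)/k))
    (hb : ∀ i : Fin k, IsGeodSegOn f (c + (i:ℝ)/k) (c + ((i:ℝ)+1)/k))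
    (μ : ℝ) (hg : ∀ s t : ℝ, dist (g s) (g t) ≤ μ * |s - t|) :
    ∀ s t : ℝ, dist (f s) (f t) ≤ μ * |s - t| := by
  have hk' : (0:ℝ) < k := by exact_mod_cast hk
  have hk0 : (k:ℝ) ≠ 0 := ne_of_gt hk'
  have hkZ : (k:ℤ) ≠ 0 := by exact_mod_cast hk.ne'
  have hfP : Function.Periodic f 1 := hfper
  have hgP : Function.Periodic g 1 := hgper
  have hfZ : ∀ (m : ℤ) (x : ℝ), f (x + m) = f x := by
    intro m x; simpa using (hfP.int_mul m) x
  have hgZ : ∀ (m : ℤ) (x : ℝ), g (x + m) = g x := by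
    intro m x; simpa using (hgP.int_mul m) x
  set A : ℤ → ℝ := fun j => c + (j:ℝ)/k with hA
  clear_value A
  -- index decomposition
  have hdec : ∀ j : ℤ, ∃ i : Fin k, ∃ m : ℤ,
      A j = c + (i:ℝ)/k + m ∧ A (j+1) = c + ((i:ℝ)+1)/k + m := by
    intro j
    have hr0 : 0 ≤ j % k := Int.emod_nonneg j hkZ
    have hrk : j % k < k := Int.emod_lt_of_pos j (by exact_mod_cast hk)
    have hj : (k:ℤ) * (j / k) + j % k = j := Int.mul_ediv_add_emod j k
    have hjR : (k:ℝ) * ((j / (k:ℤ) : ℤ):ℝ) + ((j % (k:ℤ) : ℤ):ℝ) = (j:ℝ) := by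
      exact_mod_cast congrArg (fun z : ℤ => (z:ℝ)) hj
    have hcastR : (((j % (k:ℤ)).toNat : ℕ) : ℝ) = ((j % (k:ℤ) : ℤ) : ℝ) := by
      exact_mod_cast congrArg (fun z : ℤ => (z:ℝ)) (Int.toNat_of_nonneg hr0)
    refine ⟨⟨(j % k).toNat, by omega⟩, j / k, ?_, ?_⟩
    · simp only [hA, Fin.val_mk]
      push_cast
      field_simp
      linarith [hcastR, hjR]
    · simp only [hA, Fin.val_mk]
      push_cast
      field_simp
      linarith [hcastR, hjR]
  have haZ : ∀ j : ℤ, f (A j) = g (A j) := by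
    intro j
    obtain ⟨i, m, h1, -⟩ := hdec j
    rw [h1, hfZ, hgZ]
    exact ha i
  have hbZ : ∀ j : ℤ, IsGeodSegOn f (A j) (A (j+1)) := by
    intro j
    obtain ⟨i, m, h1, h2⟩ := hdec j
    rw [h1, h2]
    exact geodShift f hfZ _ _ m (hb i)
  have hlen : ∀ j : ℤ, A (j+1) - A j = 1/(k:ℝ) := by
    intro j
    simp only [hA]
    push_cast
    field_simp
    ring
  have hend : ∀ j : ℤ, dist (f (A j)) (f (A (j+1))) ≤ μ / k := by
    intro j
    rw [haZ j, haZ (j+1)]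
    have := hg (A j) (A (j+1))
    have habs : |A j - A (j+1)| = 1/(k:ℝ) := by
      rw [abs_sub_comm, abs_of_nonneg (by rw [hlen]; positivity), hlen]
    rw [habs] at this
    calc dist (g (A j)) (g (A (j+1))) ≤ μ * (1/(k:ℝ)) := this
      _ = μ / k := by ring
  -- Lipschitz within a single interval
  have hloc1 : ∀ j : ℤ, ∀ s ∈ Icc (A j) (A (j+1)), ∀ t ∈ Icc (A j) (A (j+1)),
      dist (f s) (f t) ≤ μ * |s - t| := by
    intro j s hs t ht
    have heq := hbZ j s hs t ht
    rw [hlen j] at heq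
    have hE := hend j
    have heq' : dist (f s) (f t)
        = (k:ℝ) * (|s - t| * dist (f (A j)) (f (A (j+1)))) := by
      rw [← heq]; field_simp
    have h2 : |s - t| * dist (f (A j)) (f (A (j+1))) ≤ |s - t| * (μ / k) :=
      mul_le_mul_of_nonneg_left hE (abs_nonneg _)
    rw [heq']
    calc (k:ℝ) * (|s - t| * dist (f (A j)) (f (A (j+1))))
        ≤ (k:ℝ) * (|s - t| * (μ / k)) := mul_le_mul_of_nonneg_left h2 hk'.le
      _ = μ * |s - t| := by field_simp
  -- local Lipschitz at scale 1/(2k)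
  have hloc : ∀ s t : ℝ, |s - t| ≤ 1/(2*(k:ℝ)) → dist (f s) (f t) ≤ μ * |s - t| := by
    have main : ∀ s t : ℝ, s ≤ t → t - s ≤ 1/(2*(k:ℝ)) → dist (f s) (f t) ≤ μ * (t - s) := by
      intro s t hst hd
      set j : ℤ := ⌊(s - c) * k⌋ with hj
      have hj1 : (j:ℝ) ≤ (s - c) * k := Int.floor_le _
      have hj2 : (s - c) * k < j + 1 := Int.lt_floor_add_one _
      clear_value j
      have hAjs : A j ≤ s := by
        simp only [hA]
        have : (j:ℝ)/k ≤ s - c := (div_le_iff₀ hk').mpr hj1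
        linarith
      have hsAj1 : s < A (j+1) := by
        simp only [hA]
        push_cast
        have : s - c < ((j:ℝ)+1)/k := (lt_div_iff₀ hk').mpr hj2
        linarith
      rcases le_or_gt t (A (j+1)) with hcase | hcase
      · have := hloc1 j s ⟨hAjs, le_trans hst hcase⟩ t ⟨le_trans hAjs hst, hcase⟩
        rwa [abs_sub_comm, abs_of_nonneg (by linarith)] at this
      · have hlen1 := hlen j
        have hlen2 := hlen (j+1)
        have htA : t ≤ A (j+1+1) := by
          have h2k : 1/(2*(k:ℝ)) ≤ 1/(k:ℝ) :=
            one_div_le_one_div_of_le hk' (by linarith)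
          linarith [hd, hsAj1, h2k, hlen2]
        have hmid1 := hloc1 j s ⟨hAjs, hsAj1.le⟩ (A (j+1)) ⟨by linarith, le_refl _⟩
        have hmid2 := hloc1 (j+1) (A (j+1)) ⟨le_refl _, by linarith⟩ t ⟨hcase.le, htA⟩
        rw [abs_sub_comm, abs_of_nonneg (by linarith)] at hmid1
        rw [abs_sub_comm, abs_of_nonneg (by linarith)] at hmid2
        calc dist (f s) (f t) ≤ dist (f s) (f (A (j+1))) + dist (f (A (j+1))) (f t) :=
              dist_triangle _ _ _
          _ ≤ μ * (A (j+1) - s) + μ * (t - A (j+1)) := add_le_add hmid1 hmid2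
          _ = μ * (t - s) := by ring
    intro s t hd
    rcases le_total s t with hst | hst
    · rw [abs_sub_comm] at hd ⊢
      rw [abs_of_nonneg (by linarith)] at hd ⊢
      exact main s t hst hd
    · rw [abs_of_nonneg (by linarith)] at hd ⊢
      rw [dist_comm]
      exact main t s hst hd
  exact subdivLip f μ (1/(2*(k:ℝ))) (by positivity) hloc


/-- If `γ` is `μ`-Lipschitz then its Birkhoff shortening `D(γ) = γ₂` is
`μ`-Lipschitz as well. -/
theorem statement7
    {X : Type*} [MetricSpace X] {ε : ℝ} (hε : 0 < ε)
    (hgeo : GeodesicSpace X) (huniq : LocUniqGeo X ε)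
    (k : ℕ) (hk : 0 < k) (γ γ₁ γ₂ : ℝ → X)
    (hloop : IsLoop γ) (hper1 : ∀ t, γ₁ (t + 1) = γ₁ t) (hper2 : ∀ t, γ₂ (t + 1) = γ₂ t)
    (hdiam : ∀ t s s' : ℝ, s ∈ Icc t (t + 1/(k:ℝ)) → s' ∈ Icc t (t + 1/(k:ℝ)) →
      dist (γ s) (γ s') < ε/2)
    (h1a : ∀ i : Fin k, γ₁ ((2*(i:ℝ))/(2*k)) = γ ((2*(i:ℝ))/(2*k)))
    (h1b : ∀ i : Fin k, IsGeodSegOn γ₁ ((2*(i:ℝ))/(2*k)) ((2*(i:ℝ)+2)/(2*k)))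
    (h2a : ∀ i : Fin k, γ₂ ((2*(i:ℝ)+1)/(2*k)) = γ₁ ((2*(i:ℝ)+1)/(2*k)))
    (h2b : ∀ i : Fin k, IsGeodSegOn γ₂ ((2*(i:ℝ)+1)/(2*k)) ((2*(i:ℝ)+3)/(2*k)))
    (μ : ℝ) (hμ : ∀ s t : ℝ, dist (γ s) (γ t) ≤ μ * |s - t|) :
    ∀ s t : ℝ, dist (γ₂ s) (γ₂ t) ≤ μ * |s - t| := by
  have hk0 : (k:ℝ) ≠ 0 := by positivity
  have hγ₁ : ∀ s t : ℝ, dist (γ₁ s) (γ₁ t) ≤ μ * |s - t| := by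
    apply birkhoffKey k hk 0 γ γ₁ hloop.2 hper1 _ _ μ hμ
    · intro i
      rw [show (0:ℝ) + (i:ℝ)/k = 2*(i:ℝ)/(2*k) by field_simp; ring]
      exact h1a i
    · intro i
      rw [show (0:ℝ) + (i:ℝ)/k = 2*(i:ℝ)/(2*k) by field_simp; ring,
        show (0:ℝ) + ((i:ℝ)+1)/k = (2*(i:ℝ)+2)/(2*k) by field_simp; ring]
      exact h1b i
  apply birkhoffKey k hk (1/(2*(k:ℝ))) γ₁ γ₂ hper1 hper2 _ _ μ hγ₁
  · intro i
    rw [show 1/(2*(k:ℝ)) + (i:ℝ)/k = (2*(i:ℝ)+1)/(2*k) by field_simp; ring]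
    exact h2a i
  · intro i
    rw [show 1/(2*(k:ℝ)) + (i:ℝ)/k = (2*(i:ℝ)+1)/(2*k) by field_simp; ring,
      show 1/(2*(k:ℝ)) + ((i:ℝ)+1)/k = (2*(i:ℝ)+3)/(2*k) by field_simp; ring]
    exact h2b i
end
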